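/- Let (X,X') be an exchangeable pair of ℝ^d-valued random vectors, D := X − X', and let ℓ ∈ ℝ^d with E[|ℓD·D_1|] < ∞. Let g : ℝ → ℝ be a monotone (nondecreasing or nonincreasing) measurable function with |g(x)| ≤ 1 for all x. Then |E[(ℓD)·∫_{−D_1}^0 (g(X_1) − g(X_1 + t)) dt]| ≤ E[|E[|ℓD|·D_1 | X]|]. -/

import Mathlib

open MeasureTheory ProbabilityTheory Matrix Filter Topology Real

noncomputable section

namespace SteinPair

/-- The standard normal cumulative distribution function. -/
def stdGaussCDF (z : ℝ) : ℝ := ((gaussianReal 0 1) (Set.Iic z)).toReal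

end SteinPair

namespace SteinAux

lemma Fdiff (g : ℝ → ℝ) (hg : Monotone g) (x y : ℝ) :
    (∫ t in (0:ℝ)..x, g t) - (∫ t in (0:ℝ)..y, g t) = ∫ t in y..x, g t :=
  intervalIntegral.integral_interval_sub_left hg.intervalIntegrable hg.intervalIntegrable

lemma Fdiff_le (g : ℝ → ℝ) (hg : Monotone g) (hgb : ∀ x, |g x| ≤ 1) (x y : ℝ) :
    |(∫ t in (0:ℝ)..x, g t) - (∫ t in (0:ℝ)..y, g t)| ≤ |x - y| := by
  rw [Fdiff g hg]
  have := intervalIntegral.norm_integral_le_of_norm_le_const (C := 1) (f := g) (a := y) (b := x)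
    (fun t _ => by simpa [Real.norm_eq_abs] using hgb t)
  rw [Real.norm_eq_abs] at this
  calc |∫ t in y..x, g t| ≤ 1 * |x - y| := this
    _ = |x - y| := one_mul _

lemma rewriteI (g : ℝ → ℝ) (hg : Monotone g) (a b : ℝ) :
    (∫ t in (-(a-b))..0, (g a - g (a + t))) =
      (a-b) * g a - ((∫ t in (0:ℝ)..a, g t) - ∫ t in (0:ℝ)..b, g t) := by
  have hmono : Monotone (fun t : ℝ => g (a + t)) :=
    hg.comp (fun u v huv => by simpa using huv)
  rw [intervalIntegral.integral_sub intervalIntegrable_const hmono.intervalIntegrable,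
    intervalIntegral.integral_const]
  congr 1
  · rw [smul_eq_mul]; ring
  · have h1 : (∫ t in (-(a-b))..0, g (a + t)) = ∫ t in (-(a-b))..0, g (t + a) := by
      simp only [add_comm]
    rw [h1, intervalIntegral.integral_comp_add_right]
    have hb : -(a-b) + a = b := by ring
    have h0 : (0:ℝ) + a = a := by ring
    rw [hb, h0, Fdiff g hg]

lemma intBounds (g : ℝ → ℝ) (hg : Monotone g) (a b : ℝ) :
    (a-b) * g b ≤ (∫ t in b..a, g t) ∧ (∫ t in b..a, g t) ≤ (a-b) * g a := by
  rcases le_total b a with hba | hab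
  · constructor
    · have := intervalIntegral.integral_mono_on (f := fun _ => g b) (g := g) (μ := volume)
        hba intervalIntegrable_const hg.intervalIntegrable (fun t ht => hg ht.1)
      simpa [smul_eq_mul, mul_comm] using this
    · have := intervalIntegral.integral_mono_on (f := g) (g := fun _ => g a) (μ := volume)
        hba hg.intervalIntegrable intervalIntegrable_const (fun t ht => hg ht.2)
      simpa [smul_eq_mul, mul_comm] using this
  · have h1 : ∫ t in b..a, g t = -∫ t in a..b, g t := intervalIntegral.integral_symm a b
    have h2 : (∫ t in a..b, g t) ≤ (b-a) * g b := by
      have := intervalIntegral.integral_mono_on (f := g) (g := fun _ => g b) (μ := volume)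
        hab hg.intervalIntegrable intervalIntegrable_const (fun t ht => hg ht.2)
      simpa [smul_eq_mul, mul_comm] using this
    have h3 : (b-a) * g a ≤ ∫ t in a..b, g t := by
      have := intervalIntegral.integral_mono_on (f := fun _ => g a) (g := g) (μ := volume)
        hab intervalIntegrable_const hg.intervalIntegrable (fun t ht => hg ht.1)
      simpa [smul_eq_mul, mul_comm] using this
    constructor <;> nlinarith

lemma Kbound (g : ℝ → ℝ) (hg : Monotone g) (a b : ℝ) :
    |(a-b) * (g a + g b) - 2 * ((∫ t in (0:ℝ)..a, g t) - ∫ t in (0:ℝ)..b, g t)|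
      ≤ (a-b) * (g a - g b) := by
  rw [Fdiff g hg]
  obtain ⟨h1, h2⟩ := intBounds g hg a b
  rw [abs_le]
  constructor <;> nlinarith
lemma swap_integral {Ω : Type*} [MeasurableSpace Ω] (μ : Measure Ω) {d : ℕ}
    {X X' : Ω → Fin d → ℝ} (hX : Measurable X) (hX' : Measurable X')
    (hexch : μ.map (fun ω => (X ω, X' ω)) = μ.map (fun ω => (X' ω, X ω)))
    (Φ : ((Fin d → ℝ) × (Fin d → ℝ)) → ℝ) (hΦ : Measurable Φ) :
    ∫ ω, Φ (X ω, X' ω) ∂μ = ∫ ω, Φ (X' ω, X ω) ∂μ := by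
  rw [← integral_map (hX.prodMk hX').aemeasurable hΦ.aestronglyMeasurable, hexch,
      integral_map (hX'.prodMk hX).aemeasurable hΦ.aestronglyMeasurable]

lemma abs_aux {l dd fa fb ga : ℝ} (h1 : |ga| ≤ 1) (h2 : |fa - fb| ≤ |dd|) :
    |l * (dd * ga - (fa - fb))| ≤ 2 * |l * dd| := by
  rw [abs_mul, abs_mul]
  have h3 : |dd * ga - (fa - fb)| ≤ |dd * ga| + |fa - fb| := by
    calc |dd * ga - (fa - fb)| ≤ |dd * ga - 0| + |0 - (fa - fb)| := abs_sub_le _ 0 _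
      _ = |dd * ga| + |fa - fb| := by rw [sub_zero, zero_sub, abs_neg]
  have h4 : |dd * ga| ≤ |dd| := by
    rw [abs_mul]
    nlinarith [abs_nonneg dd, abs_nonneg ga]
  nlinarith [abs_nonneg l, abs_nonneg dd]

theorem key
    {Ω : Type*} [MeasurableSpace Ω] (μ : Measure Ω) [IsProbabilityMeasure μ]
    {d : ℕ} (hd : 0 < d) (X X' : Ω → Fin d → ℝ) (hX : Measurable X) (hX' : Measurable X')
    (hexch : μ.map (fun ω => (X ω, X' ω)) = μ.map (fun ω => (X' ω, X ω)))
    (ℓ : Fin d → ℝ)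
    (hint : Integrable (fun ω => (ℓ ⬝ᵥ (X ω - X' ω)) * (X ω ⟨0, hd⟩ - X' ω ⟨0, hd⟩)) μ)
    (g : ℝ → ℝ) (hg : Monotone g) (hgm : Measurable g)
    (hgb : ∀ x, |g x| ≤ 1) :
    |∫ ω, (ℓ ⬝ᵥ (X ω - X' ω)) *
        (∫ t in (-(X ω ⟨0, hd⟩ - X' ω ⟨0, hd⟩))..0, (g (X ω ⟨0, hd⟩) - g (X ω ⟨0, hd⟩ + t))) ∂μ|
      ≤ ∫ ω, |(μ[(fun ω' => |ℓ ⬝ᵥ (X ω' - X' ω')| * (X ω' ⟨0, hd⟩ - X' ω' ⟨0, hd⟩)) |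
          MeasurableSpace.comap X MeasurableSpace.pi]) ω| ∂μ := by
  set i0 : Fin d := ⟨0, hd⟩ with hi0
  set F : ℝ → ℝ := fun x => ∫ t in (0:ℝ)..x, g t with hFdef
  have hFc : Continuous F := intervalIntegral.continuous_primitive
    (fun a b => hg.intervalIntegrable) 0
  -- rewrite inner integral
  have hIrw : ∀ ω, (∫ t in (-(X ω i0 - X' ω i0))..0, (g (X ω i0) - g (X ω i0 + t)))
      = (X ω i0 - X' ω i0) * g (X ω i0) - (F (X ω i0) - F (X' ω i0)) :=
    fun ω => rewriteI g hg _ _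
  simp only [hIrw]
  -- measurability infrastructure
  have hdot : Measurable (fun z : (Fin d → ℝ) × (Fin d → ℝ) => ℓ ⬝ᵥ (z.1 - z.2)) := by
    simp only [dotProduct, Pi.sub_apply]
    exact Finset.measurable_sum _ fun i _ => measurable_const.mul
      (((measurable_pi_apply i).comp measurable_fst).sub
        ((measurable_pi_apply i).comp measurable_snd))
  have hz1 : Measurable (fun z : (Fin d → ℝ) × (Fin d → ℝ) => z.1 i0) :=
    (measurable_pi_apply i0).comp measurable_fst
  have hz2 : Measurable (fun z : (Fin d → ℝ) × (Fin d → ℝ) => z.2 i0) :=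
    (measurable_pi_apply i0).comp measurable_snd
  -- key functions
  set Φ : ((Fin d → ℝ) × (Fin d → ℝ)) → ℝ := fun z => (ℓ ⬝ᵥ (z.1 - z.2)) *
    ((z.1 i0 - z.2 i0) * g (z.1 i0) - (F (z.1 i0) - F (z.2 i0))) with hΦdef
  set Ψ : ((Fin d → ℝ) × (Fin d → ℝ)) → ℝ := fun z => |ℓ ⬝ᵥ (z.1 - z.2)| *
    (z.1 i0 - z.2 i0) * g (z.2 i0) with hΨdef
  have hΦm : Measurable Φ :=
    hdot.mul (((hz1.sub hz2).mul (hgm.comp hz1)).sub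
      ((hFc.measurable.comp hz1).sub (hFc.measurable.comp hz2)))
  have hΨm : Measurable Ψ := (hdot.abs.mul (hz1.sub hz2)).mul (hgm.comp hz2)
  -- integrability helper
  have hbound : ∀ (f : Ω → ℝ), Measurable f →
      (∀ ω, |f ω| ≤ 2 * |(ℓ ⬝ᵥ (X ω - X' ω)) * (X ω i0 - X' ω i0)|) → Integrable f μ :=
    fun f hf hb => (hint.abs.const_mul 2).mono' hf.aestronglyMeasurable
      (ae_of_all _ fun ω => by simpa [Real.norm_eq_abs] using hb ω)
  have hneg : ∀ ω, ℓ ⬝ᵥ (X' ω - X ω) = -(ℓ ⬝ᵥ (X ω - X' ω)) := fun ω => by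
    rw [← neg_sub, dotProduct_neg]
  have habs_int : ∀ (f : Ω → ℝ), |∫ ω, f ω ∂μ| ≤ ∫ ω, |f ω| ∂μ := fun f => by
    simpa only [Real.norm_eq_abs] using norm_integral_le_integral_norm (μ := μ) f
  have hFd : ∀ x y : ℝ, |F x - F y| ≤ |x - y| := Fdiff_le g hg hgb
  -- the measurable functions on Ω
  have hLm : Measurable fun ω => ℓ ⬝ᵥ (X ω - X' ω) := hdot.comp (hX.prodMk hX')
  have hAm : Measurable fun ω => X ω i0 := (measurable_pi_apply i0).comp hX
  have hBm : Measurable fun ω => X' ω i0 := (measurable_pi_apply i0).comp hX'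
  -- integrability of the various integrands
  have hf1 : Integrable (fun ω => Φ (X ω, X' ω)) μ := by
    refine hbound _ (hΦm.comp (hX.prodMk hX')) fun ω => ?_
    exact abs_aux (hgb _) (hFd (X ω i0) (X' ω i0))
  have hf2 : Integrable (fun ω => Φ (X' ω, X ω)) μ := by
    refine hbound _ (hΦm.comp (hX'.prodMk hX)) fun ω => ?_
    have := abs_aux (l := ℓ ⬝ᵥ (X' ω - X ω)) (dd := X' ω i0 - X ω i0)
      (fa := F (X' ω i0)) (fb := F (X ω i0)) (hgb (X' ω i0)) (hFd (X' ω i0) (X ω i0))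
    calc |Φ (X' ω, X ω)| ≤ 2 * |(ℓ ⬝ᵥ (X' ω - X ω)) * (X' ω i0 - X ω i0)| := this
      _ = 2 * |(ℓ ⬝ᵥ (X ω - X' ω)) * (X ω i0 - X' ω i0)| := by
          rw [hneg ω]; rw [show X' ω i0 - X ω i0 = -(X ω i0 - X' ω i0) by ring]
          rw [neg_mul_neg]
  have hf4 : Integrable (fun ω => |ℓ ⬝ᵥ (X ω - X' ω)| *
      ((X ω i0 - X' ω i0) * (g (X ω i0) - g (X' ω i0)))) μ := by
    refine hbound _ (hLm.abs.mul ((hAm.sub hBm).mul ((hgm.comp hAm).sub (hgm.comp hBm))))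
      fun ω => ?_
    rw [abs_mul, abs_mul, abs_abs, abs_mul]
    have h1 : |g (X ω i0) - g (X' ω i0)| ≤ 2 := by
      calc |g (X ω i0) - g (X' ω i0)| ≤ |g (X ω i0) - 0| + |0 - g (X' ω i0)| := abs_sub_le _ 0 _
        _ ≤ 2 := by rw [sub_zero, zero_sub, abs_neg]; linarith [hgb (X ω i0), hgb (X' ω i0)]
    nlinarith [mul_le_mul_of_nonneg_left h1
      (mul_nonneg (abs_nonneg (ℓ ⬝ᵥ (X ω - X' ω))) (abs_nonneg (X ω i0 - X' ω i0)))]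
  have hboundsimple : ∀ (f : Ω → ℝ), Measurable f →
      (∀ ω, |f ω| ≤ |(ℓ ⬝ᵥ (X ω - X' ω)) * (X ω i0 - X' ω i0)|) → Integrable f μ := by
    intro f hf hb
    refine hbound f hf fun ω => (hb ω).trans ?_
    nlinarith [abs_nonneg ((ℓ ⬝ᵥ (X ω - X' ω)) * (X ω i0 - X' ω i0))]
  have hh : Integrable (fun ω' => |ℓ ⬝ᵥ (X ω' - X' ω')| * (X ω' i0 - X' ω' i0)) μ := by
    refine hboundsimple _ (hLm.abs.mul (hAm.sub hBm)) fun ω => le_of_eq ?_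
    rw [abs_mul, abs_mul, abs_abs]
  have hf6 : Integrable (fun ω => Ψ (X ω, X' ω)) μ := by
    refine hboundsimple _ (hΨm.comp (hX.prodMk hX')) fun ω => ?_
    rw [hΨdef]
    simp only [abs_mul, abs_abs]
    nlinarith [abs_nonneg (ℓ ⬝ᵥ (X ω - X' ω)), abs_nonneg (X ω i0 - X' ω i0), abs_nonneg (g (X' ω i0)),
      hgb (X' ω i0), mul_nonneg (abs_nonneg (ℓ ⬝ᵥ (X ω - X' ω))) (abs_nonneg (X ω i0 - X' ω i0))]
  have hf7 : Integrable (fun ω => |ℓ ⬝ᵥ (X ω - X' ω)| * (X ω i0 - X' ω i0) * g (X ω i0)) μ := by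
    refine hboundsimple _ ((hLm.abs.mul (hAm.sub hBm)).mul (hgm.comp hAm)) fun ω => ?_
    simp only [abs_mul, abs_abs]
    nlinarith [abs_nonneg (ℓ ⬝ᵥ (X ω - X' ω)), abs_nonneg (X ω i0 - X' ω i0), abs_nonneg (g (X ω i0)),
      hgb (X ω i0), mul_nonneg (abs_nonneg (ℓ ⬝ᵥ (X ω - X' ω))) (abs_nonneg (X ω i0 - X' ω i0))]
  -- step 2 : symmetrization
  have hswap1 : ∫ ω, Φ (X ω, X' ω) ∂μ = ∫ ω, Φ (X' ω, X ω) ∂μ :=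
    swap_integral μ hX hX' hexch Φ hΦm
  have hsum : ∀ ω, Φ (X ω, X' ω) + Φ (X' ω, X ω) = (ℓ ⬝ᵥ (X ω - X' ω)) *
      ((X ω i0 - X' ω i0) * (g (X ω i0) + g (X' ω i0))
        - 2 * (F (X ω i0) - F (X' ω i0))) := by
    intro ω
    rw [hΦdef]
    simp only
    rw [hneg ω]
    ring
  have hT2 : (2:ℝ) * ∫ ω, Φ (X ω, X' ω) ∂μ = ∫ ω, (ℓ ⬝ᵥ (X ω - X' ω)) *
      ((X ω i0 - X' ω i0) * (g (X ω i0) + g (X' ω i0))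
        - 2 * (F (X ω i0) - F (X' ω i0))) ∂μ := by
    rw [two_mul]
    nth_rewrite 2 [hswap1]
    rw [← integral_add hf1 hf2]
    exact integral_congr_ae (ae_of_all _ hsum)
  have hf3 : Integrable (fun ω => (ℓ ⬝ᵥ (X ω - X' ω)) *
      ((X ω i0 - X' ω i0) * (g (X ω i0) + g (X' ω i0))
        - 2 * (F (X ω i0) - F (X' ω i0)))) μ := by
    have := hf1.add hf2
    refine this.congr (ae_of_all _ fun ω => hsum ω)
  -- step 3 : |T| ≤ (1/2) ∫ |L| M
  have hstep1 : |∫ ω, Φ (X ω, X' ω) ∂μ| ≤ (1/2) * ∫ ω, |ℓ ⬝ᵥ (X ω - X' ω)| *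
      ((X ω i0 - X' ω i0) * (g (X ω i0) - g (X' ω i0))) ∂μ := by
    have e1 : ∫ ω, Φ (X ω, X' ω) ∂μ = (1/2) * ∫ ω, (ℓ ⬝ᵥ (X ω - X' ω)) *
        ((X ω i0 - X' ω i0) * (g (X ω i0) + g (X' ω i0))
          - 2 * (F (X ω i0) - F (X' ω i0))) ∂μ := by linarith [hT2]
    rw [e1, abs_mul]
    have : |(1:ℝ)/2| = 1/2 := by norm_num
    rw [this]
    have h2 : |∫ ω, (ℓ ⬝ᵥ (X ω - X' ω)) *
        ((X ω i0 - X' ω i0) * (g (X ω i0) + g (X' ω i0))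
          - 2 * (F (X ω i0) - F (X' ω i0))) ∂μ| ≤ ∫ ω, |ℓ ⬝ᵥ (X ω - X' ω)| *
        ((X ω i0 - X' ω i0) * (g (X ω i0) - g (X' ω i0))) ∂μ := by
      calc |∫ ω, (ℓ ⬝ᵥ (X ω - X' ω)) *
          ((X ω i0 - X' ω i0) * (g (X ω i0) + g (X' ω i0))
            - 2 * (F (X ω i0) - F (X' ω i0))) ∂μ|
          ≤ ∫ ω, |(ℓ ⬝ᵥ (X ω - X' ω)) *
            ((X ω i0 - X' ω i0) * (g (X ω i0) + g (X' ω i0))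
              - 2 * (F (X ω i0) - F (X' ω i0)))| ∂μ := habs_int _
        _ ≤ _ := by
            refine integral_mono hf3.abs hf4 fun ω => ?_
            rw [abs_mul]
            exact mul_le_mul_of_nonneg_left (Kbound g hg (X ω i0) (X' ω i0)) (abs_nonneg _)
    linarith [h2]
  -- step 4 : second exchangeability
  have hswap2 : ∫ ω, Ψ (X ω, X' ω) ∂μ = ∫ ω, Ψ (X' ω, X ω) ∂μ :=
    swap_integral μ hX hX' hexch Ψ hΨm
  have hΨswap : ∀ ω, Ψ (X' ω, X ω) =
      -( |ℓ ⬝ᵥ (X ω - X' ω)| * (X ω i0 - X' ω i0) * g (X ω i0)) := by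
    intro ω
    rw [hΨdef]
    simp only
    rw [hneg ω, abs_neg]
    ring
  have hΨval : ∫ ω, Ψ (X ω, X' ω) ∂μ =
      -∫ ω, |ℓ ⬝ᵥ (X ω - X' ω)| * (X ω i0 - X' ω i0) * g (X ω i0) ∂μ := by
    rw [hswap2, ← integral_neg]
    exact integral_congr_ae (ae_of_all _ fun ω => hΨswap ω)
  have hMsplit : ∫ ω, |ℓ ⬝ᵥ (X ω - X' ω)| *
      ((X ω i0 - X' ω i0) * (g (X ω i0) - g (X' ω i0))) ∂μ
      = 2 * ∫ ω, |ℓ ⬝ᵥ (X ω - X' ω)| * (X ω i0 - X' ω i0) * g (X ω i0) ∂μ := by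
    have e : ∀ ω, |ℓ ⬝ᵥ (X ω - X' ω)| *
        ((X ω i0 - X' ω i0) * (g (X ω i0) - g (X' ω i0)))
        = |ℓ ⬝ᵥ (X ω - X' ω)| * (X ω i0 - X' ω i0) * g (X ω i0) - Ψ (X ω, X' ω) := by
      intro ω; rw [hΨdef]; simp only; ring
    rw [integral_congr_ae (ae_of_all _ e), integral_sub hf7 hf6, hΨval]
    ring
  -- step 5 : conditional expectation
  have hm : MeasurableSpace.comap X MeasurableSpace.pi ≤ _ := hX.comap_le
  have hgA_sm : StronglyMeasurable[MeasurableSpace.comap X MeasurableSpace.pi]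
      (fun ω => g (X ω i0)) :=
    (hgm.comp ((measurable_pi_apply i0).comp
      ((measurable_iff_comap_le (f := X)).mpr le_rfl))).stronglyMeasurable
  have hf8 : Integrable (fun ω => (fun ω => g (X ω i0)) ω *
      (fun ω' => |ℓ ⬝ᵥ (X ω' - X' ω')| * (X ω' i0 - X' ω' i0)) ω) μ := by
    refine hboundsimple _ ((hgm.comp hAm).mul (hLm.abs.mul (hAm.sub hBm))) fun ω => ?_
    simp only [abs_mul, abs_abs]
    nlinarith [abs_nonneg (ℓ ⬝ᵥ (X ω - X' ω)), abs_nonneg (X ω i0 - X' ω i0),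
      abs_nonneg (g (X ω i0)), hgb (X ω i0),
      mul_nonneg (abs_nonneg (ℓ ⬝ᵥ (X ω - X' ω))) (abs_nonneg (X ω i0 - X' ω i0))]
  have hcond : ∫ ω, |ℓ ⬝ᵥ (X ω - X' ω)| * (X ω i0 - X' ω i0) * g (X ω i0) ∂μ
      ≤ ∫ ω, |(μ[(fun ω' => |ℓ ⬝ᵥ (X ω' - X' ω')| * (X ω' i0 - X' ω' i0)) |
          MeasurableSpace.comap X MeasurableSpace.pi]) ω| ∂μ := by
    have hmul := condExp_mul_of_stronglyMeasurable_left (μ := μ) hgA_sm hf8 hh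
    have e1 : ∫ ω, |ℓ ⬝ᵥ (X ω - X' ω)| * (X ω i0 - X' ω i0) * g (X ω i0) ∂μ
        = ∫ ω, ((fun ω => g (X ω i0)) * (fun ω' => |ℓ ⬝ᵥ (X ω' - X' ω')| *
            (X ω' i0 - X' ω' i0))) ω ∂μ := by
      refine integral_congr_ae (ae_of_all _ fun ω => ?_)
      simp only [Pi.mul_apply]
      ring
    rw [e1, ← integral_condExp hm]
    calc ∫ ω, (μ[(fun ω => g (X ω i0)) * (fun ω' => |ℓ ⬝ᵥ (X ω' - X' ω')| *
            (X ω' i0 - X' ω' i0)) | MeasurableSpace.comap X MeasurableSpace.pi]) ω ∂μ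
        = ∫ ω, g (X ω i0) * (μ[(fun ω' => |ℓ ⬝ᵥ (X ω' - X' ω')| *
            (X ω' i0 - X' ω' i0)) | MeasurableSpace.comap X MeasurableSpace.pi]) ω ∂μ := by
          refine integral_congr_ae (hmul.mono fun ω hω => ?_)
          rw [hω]; simp [Pi.mul_apply]
      _ ≤ _ := by
          refine integral_mono ?_ integrable_condExp.abs fun ω => ?_
          · exact integrable_condExp.bdd_mul ((hgm.comp hAm).aestronglyMeasurable)
              (ae_of_all _ fun ω => by simpa [Real.norm_eq_abs] using hgb (X ω i0))
          · calc g (X ω i0) * _ ≤ |g (X ω i0) * _| := le_abs_self _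
              _ = |g (X ω i0)| * |_| := abs_mul _ _
              _ ≤ 1 * |_| := mul_le_mul_of_nonneg_right (hgb _) (abs_nonneg _)
              _ = _ := one_mul _
  -- assemble
  calc |∫ ω, (ℓ ⬝ᵥ (X ω - X' ω)) * ((X ω i0 - X' ω i0) * g (X ω i0)
        - (F (X ω i0) - F (X' ω i0))) ∂μ|
      = |∫ ω, Φ (X ω, X' ω) ∂μ| := rfl
    _ ≤ (1/2) * ∫ ω, |ℓ ⬝ᵥ (X ω - X' ω)| *
        ((X ω i0 - X' ω i0) * (g (X ω i0) - g (X' ω i0))) ∂μ := hstep1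
    _ = ∫ ω, |ℓ ⬝ᵥ (X ω - X' ω)| * (X ω i0 - X' ω i0) * g (X ω i0) ∂μ := by
        rw [hMsplit]; ring
    _ ≤ _ := hcond

end SteinAux

namespace SteinPair

/-- For an exchangeable pair `(X, X')` with `D = X − X'`, `ℓ ∈ ℝ^d`, and a monotone
measurable `g` bounded by `1`,
`|E[ℓD·∫_{−D_1}^0 (g(X_1) − g(X_1 + t)) dt]| ≤ E[|E[|ℓD|·D_1 | X]|]`. -/
theorem stein_pair_monotone_bound
    {Ω : Type*} [MeasurableSpace Ω] (μ : Measure Ω) [IsProbabilityMeasure μ]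
    {d : ℕ} (hd : 0 < d) (X X' : Ω → Fin d → ℝ) (hX : Measurable X) (hX' : Measurable X')
    (hexch : μ.map (fun ω => (X ω, X' ω)) = μ.map (fun ω => (X' ω, X ω)))
    (ℓ : Fin d → ℝ)
    (hint : Integrable (fun ω => (ℓ ⬝ᵥ (X ω - X' ω)) * (X ω ⟨0, hd⟩ - X' ω ⟨0, hd⟩)) μ)
    (g : ℝ → ℝ) (hg : Monotone g ∨ Antitone g) (hgm : Measurable g)
    (hgb : ∀ x, |g x| ≤ 1) :
    |∫ ω, (ℓ ⬝ᵥ (X ω - X' ω)) *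
        (∫ t in (-(X ω ⟨0, hd⟩ - X' ω ⟨0, hd⟩))..0, (g (X ω ⟨0, hd⟩) - g (X ω ⟨0, hd⟩ + t))) ∂μ|
      ≤ ∫ ω, |(μ[(fun ω' => |ℓ ⬝ᵥ (X ω' - X' ω')| * (X ω' ⟨0, hd⟩ - X' ω' ⟨0, hd⟩)) |
          MeasurableSpace.comap X MeasurableSpace.pi]) ω| ∂μ := by
  rcases hg with hmono | hanti
  · exact SteinAux.key μ hd X X' hX hX' hexch ℓ hint g hmono hgm hgb
  · have hm2 : Monotone (fun x => -g x) := fun x y h => neg_le_neg (hanti h)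
    have hb2 : ∀ x, |(fun x => -g x) x| ≤ 1 := fun x => by
      simpa using hgb x
    have hkey := SteinAux.key μ hd X X' hX hX' hexch ℓ hint (fun x => -g x) hm2
      hgm.neg hb2
    have hrw : ∀ ω, (∫ t in (-(X ω ⟨0, hd⟩ - X' ω ⟨0, hd⟩))..0,
        ((fun x => -g x) (X ω ⟨0, hd⟩) - (fun x => -g x) (X ω ⟨0, hd⟩ + t)))
        = -(∫ t in (-(X ω ⟨0, hd⟩ - X' ω ⟨0, hd⟩))..0,
            (g (X ω ⟨0, hd⟩) - g (X ω ⟨0, hd⟩ + t))) := by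
      intro ω
      rw [← intervalIntegral.integral_neg]
      congr 1
      funext t
      simp only
      ring
    simp only [hrw, mul_neg] at hkey
    rw [integral_neg, abs_neg] at hkey
    exact hkey

end SteinPair
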